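/- For each cyclic permutation (i,j,k) of (1,2,3) and all signs ε, δ ∈ {+1,−1}, the idempotent I_{ij}^ε P_k^δ satisfies the inhomogeneous proper-value equation (K+1)(I_{ij}^ε P_k^δ) = 2 I_{ij}^ε P_k^δ − (1/2)(1 + εδ X₁X₂X₃). -/
import Mathlib


open scoped TensorProduct

noncomputable section

/-- The standard positive-definite quadratic form on `ℝ³`. -/
abbrev Q3 : QuadraticForm ℝ (Fin 3 → ℝ) :=
  QuadraticMap.weightedSumSquares ℝ (fun _ : Fin 3 => (1 : ℝ))

/-- The Clifford algebra of 3-dimensional Euclidean space. -/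
abbrev Cl3 : Type := CliffordAlgebra Q3

/-- The tensor product of two copies of `Cl3`, as ℝ-algebras. -/
abbrev A3 : Type := Cl3 ⊗[ℝ] Cl3

/-- The generators `e₁, e₂, e₃` (indexed by `Fin 3`). -/
def e (l : Fin 3) : Cl3 := CliffordAlgebra.ι Q3 (Pi.single l 1)

/-- `X_l := e_l ⊗ e_l`. -/
def X (l : Fin 3) : A3 := e l ⊗ₜ[ℝ] e l

/-- `w^i := (e_j e_k) ⊗ 1` for `(i,j,k)` a cyclic permutation of the indices. -/
def w (i : Fin 3) : A3 := (e (i + 1) * e (i + 2)) ⊗ₜ[ℝ] (1 : Cl3)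

/-- The (ℝ-linear) operators `J_l(U) := (1/2)(w^l U − U w^l)`. -/
def J (l : Fin 3) (U : A3) : A3 := (1/2 : ℝ) • (w l * U - U * w l)

/-- Kähler's total angular momentum operator `K+1`. -/
def K1 (U : A3) : A3 := J 0 U * w 0 + J 1 U * w 1 + J 2 U * w 2

/-- The idempotents `I_{ij}^ε := (1/2)(1 + ε X_i X_j)`. -/
def Iem (i j : Fin 3) (ε : ℝ) : A3 := (1/2 : ℝ) • ((1 : A3) + ε • (X i * X j))

/-- The idempotents `P_l^δ := (1/2)(1 + δ X_l)`. -/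
def P (l : Fin 3) (δ : ℝ) : A3 := (1/2 : ℝ) • ((1 : A3) + δ • X l)


lemma e_sq (l : Fin 3) : e l * e l = 1 := by
  rw [e, CliffordAlgebra.ι_sq_scalar]
  simp [QuadraticMap.weightedSumSquares_apply, Pi.single_apply]

lemma e_anti {l m : Fin 3} (h : l ≠ m) : e l * e m = -(e m * e l) := by
  have := CliffordAlgebra.ι_mul_ι_add_swap (Q := Q3) (Pi.single l 1) (Pi.single m 1)
  rw [QuadraticMap.polar] at this
  fin_cases l <;> fin_cases m <;> simp_all [QuadraticMap.weightedSumSquares_apply,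
    Fin.sum_univ_three, Pi.single_apply, e] <;>
    linear_combination (norm := noncomm_ring) this

lemma esq' (l : Fin 3) (x : Cl3) : e l * (e l * x) = x := by
  rw [← mul_assoc, e_sq, one_mul]
lemma e10 : e 1 * e 0 = -(e 0 * e 1) := e_anti (by decide)
lemma e20 : e 2 * e 0 = -(e 0 * e 2) := e_anti (by decide)
lemma e21 : e 2 * e 1 = -(e 1 * e 2) := e_anti (by decide)
lemma e10' (x : Cl3) : e 1 * (e 0 * x) = -(e 0 * (e 1 * x)) := by
  rw [← mul_assoc, e10, neg_mul, mul_assoc]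
lemma e20' (x : Cl3) : e 2 * (e 0 * x) = -(e 0 * (e 2 * x)) := by
  rw [← mul_assoc, e20, neg_mul, mul_assoc]
lemma e21' (x : Cl3) : e 2 * (e 1 * x) = -(e 1 * (e 2 * x)) := by
  rw [← mul_assoc, e21, neg_mul, mul_assoc]

set_option maxHeartbeats 4000000 in

/-- For each cyclic permutation `(i,j,k)` and signs `ε, δ`:
`(K+1)(I_{ij}^ε P_k^δ) = 2 I_{ij}^ε P_k^δ − (1/2)(1 + εδ X₁X₂X₃)`. -/
theorem stmt8 (i j k : Fin 3) (hj : j = i + 1) (hk : k = i + 2)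
    (ε δ : ℝ) (hε : ε = 1 ∨ ε = -1) (hδ : δ = 1 ∨ δ = -1) :
    K1 (Iem i j ε * P k δ) =
      2 * (Iem i j ε * P k δ) - (1/2 : ℝ) • ((1 : A3) + (ε * δ) • (X 0 * X 1 * X 2)) := by
  subst hj hk
  have hi : i = 0 ∨ i = 1 ∨ i = 2 :=
    (by omega : i.val = 0 ∨ i.val = 1 ∨ i.val = 2).imp (fun h => Fin.ext h)
      (Or.imp (fun h => Fin.ext h) (fun h => Fin.ext h))
  rcases hε with rfl | rfl <;> rcases hδ with rfl | rfl <;> rcases hi with rfl | rfl | rfl <;>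
  · simp only [K1, J, Iem, P, w, X, Fin.isValue, Fin.reduceAdd,
      Algebra.TensorProduct.one_def, two_mul,
      smul_add, smul_smul, mul_add, add_mul, mul_sub, sub_mul, smul_mul_assoc,
      mul_smul_comm, Algebra.TensorProduct.tmul_mul_tmul, one_mul, mul_one,
      mul_assoc, esq', e_sq, e10, e20, e21, e10', e20', e21',
      neg_mul, mul_neg, neg_neg, smul_neg, neg_smul, TensorProduct.neg_tmul,
      TensorProduct.tmul_neg, one_smul]
    module
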